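/- For m ≥ 3, the polynomial congruence Π_{i=1}^{2^{m−1}} (1 − (2i−1)x) ≡ (1 + 3x²)^{2^{m−2}} (mod 2^{m+1}) holds, i.e. all coefficients of the difference are divisible by 2^{m+1}. -/

import Mathlib

open Polynomial Finset

private lemma prod_congr_pow {s : Finset ℕ} {f : ℕ → Polynomial ℤ} {g d : Polynomial ℤ}
    (h : ∀ i ∈ s, d ∣ (f i - g)) : d ∣ (∏ i ∈ s, f i - g ^ s.card) := by
  classical
  induction s using Finset.induction with
  | empty => simp
  | @insert j s hj ih =>
    rw [Finset.prod_insert hj, Finset.card_insert_of_notMem hj]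
    have h1 : d ∣ (f j - g) := h j (Finset.mem_insert_self _ _)
    have h2 : d ∣ (∏ i ∈ s, f i - g ^ s.card) :=
      ih (fun i hi => h i (Finset.mem_insert_of_mem hi))
    have : f j * ∏ i ∈ s, f i - g ^ (s.card + 1)
        = (f j - g) * ∏ i ∈ s, f i + g * (∏ i ∈ s, f i - g ^ s.card) := by ring
    rw [this]
    exact dvd_add (dvd_mul_of_dvd_left h1 _) (Dvd.dvd.mul_left h2 _)

private lemma prod_sub_expand (s : Finset ℕ) (a : ℕ → Polynomial ℤ) (c : Polynomial ℤ) :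
    ∃ E : Polynomial ℤ, ∏ i ∈ s, (a i - c) =
      ∏ i ∈ s, a i - c * (∑ j ∈ s, ∏ i ∈ s.erase j, a i) + c ^ 2 * E := by
  classical
  induction s using Finset.induction with
  | empty => exact ⟨0, by simp⟩
  | @insert j s hj ih =>
    obtain ⟨E, hE⟩ := ih
    refine ⟨a j * E + (∑ j' ∈ s, ∏ i ∈ s.erase j', a i) - c * E, ?_⟩
    have hsum : ∑ j' ∈ insert j s, ∏ i ∈ (insert j s).erase j', a i
        = ∏ i ∈ s, a i + a j * ∑ j' ∈ s, ∏ i ∈ s.erase j', a i := by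
      rw [Finset.sum_insert hj, Finset.erase_insert hj, Finset.mul_sum]
      congr 1
      refine Finset.sum_congr rfl (fun j' hj' => ?_)
      rw [Finset.erase_insert_of_ne (ne_of_mem_of_not_mem hj' hj).symm,
        Finset.prod_insert (fun hc => hj (Finset.mem_of_mem_erase hc))]
    rw [Finset.prod_insert hj, Finset.prod_insert hj, hsum, hE]
    ring

private lemma sum_range_two_mul (q : ℕ) (f : ℕ → Polynomial ℤ) :
    ∑ i ∈ Finset.range (2 * q), f i = ∑ l ∈ Finset.range q, (f (2 * l) + f (2 * l + 1)) := by
  induction q with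
  | zero => simp
  | succ q ih =>
    rw [Nat.mul_succ, Finset.sum_range_succ, Finset.sum_range_succ, Finset.sum_range_succ, ih]
    ring

/-- the factor -/
private noncomputable def A (i : ℕ) : Polynomial ℤ := 1 - C (2 * (i : ℤ) - 1) * X

private lemma A_mod2 (i : ℕ) : (C 2 : Polynomial ℤ) ∣ (A i - (1 + X)) := by
  refine ⟨C (- (i : ℤ)) * X, ?_⟩
  simp [A]
  ring

private lemma S4 (n : ℕ) (hn : 4 ∣ n) :
    (C 4 : Polynomial ℤ) ∣ ∑ j ∈ Finset.Icc 1 n, ∏ i ∈ (Finset.Icc 1 n).erase j, A i := by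
  classical
  obtain ⟨t, rfl⟩ := hn
  -- reindex over range
  have hIcc : Finset.Icc 1 (4 * t) = (Finset.range (4 * t)).map (addLeftEmbedding 1) := by
    rw [Finset.range_eq_Ico, Finset.map_add_left_Ico]
    rw [show (1:ℕ) + 4 * t = (4 * t) + 1 by omega, Finset.Ico_add_one_right_eq_Icc, Nat.add_zero]
  have h1 : ∑ j ∈ Finset.Icc 1 (4 * t), ∏ i ∈ (Finset.Icc 1 (4 * t)).erase j, A i
      = ∑ j ∈ Finset.range (4 * t), ∏ i ∈ (Finset.Icc 1 (4 * t)).erase (1 + j), A i := by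
    rw [hIcc, Finset.sum_map]
    rfl
  rw [h1]
  set s : Finset ℕ := Finset.Icc 1 (4 * t) with hs
  rw [show Finset.range (4 * t) = Finset.range (2 * (2 * t)) from by rw [show 4 * t = 2 * (2 * t) from by ring],
    sum_range_two_mul]
  have key : ∀ l ∈ Finset.range (2 * t),
      (∏ i ∈ s.erase (1 + 2 * l), A i) + ∏ i ∈ s.erase (1 + (2 * l + 1)), A i
      = C 2 * ((1 - C (4 * (l : ℤ) + 2) * X) *
          ∏ i ∈ (s.erase (1 + 2 * l)).erase (1 + (2 * l + 1)), A i) := by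
    intro l hl
    have hl' : l < 2 * t := Finset.mem_range.mp hl
    have hj1 : 1 + 2 * l ∈ s := by
      rw [hs, Finset.mem_Icc]; omega
    have hj2 : 1 + (2 * l + 1) ∈ s := by
      rw [hs, Finset.mem_Icc]; omega
    have hne : (1 + (2 * l + 1)) ≠ 1 + 2 * l := by omega
    have h2 : 1 + (2 * l + 1) ∈ s.erase (1 + 2 * l) := Finset.mem_erase.mpr ⟨hne, hj2⟩
    have h1 : 1 + 2 * l ∈ s.erase (1 + (2 * l + 1)) := Finset.mem_erase.mpr ⟨hne.symm, hj1⟩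
    rw [← Finset.mul_prod_erase _ A h2, ← Finset.mul_prod_erase _ A h1,
      Finset.erase_right_comm (a := 1 + (2 * l + 1))]
    have hAB : A (1 + (2 * l + 1)) + A (1 + 2 * l) = C 2 * (1 - C (4 * (l : ℤ) + 2) * X) := by
      simp only [A]
      push_cast
      simp only [map_sub, map_add, map_mul, map_one, map_ofNat, map_natCast]
      ring
    calc A (1 + (2 * l + 1)) * ∏ i ∈ (s.erase (1 + 2 * l)).erase (1 + (2 * l + 1)), A i
          + A (1 + 2 * l) * ∏ i ∈ (s.erase (1 + 2 * l)).erase (1 + (2 * l + 1)), A i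
        = (A (1 + (2 * l + 1)) + A (1 + 2 * l)) *
            ∏ i ∈ (s.erase (1 + 2 * l)).erase (1 + (2 * l + 1)), A i := by ring
      _ = _ := by rw [hAB]; ring
  rw [Finset.sum_congr rfl key, ← Finset.mul_sum]
  have hC4 : (C 4 : Polynomial ℤ) = C 2 * C 2 := by rw [← C_mul]; norm_num
  rw [hC4]
  refine mul_dvd_mul_left _ ?_
  -- show C 2 divides the inner sum
  have hcard : ∀ l ∈ Finset.range (2 * t),
      ((s.erase (1 + 2 * l)).erase (1 + (2 * l + 1))).card = 4 * t - 2 := by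
    intro l hl
    have hl' : l < 2 * t := Finset.mem_range.mp hl
    have hj1 : 1 + 2 * l ∈ s := by rw [hs, Finset.mem_Icc]; omega
    have hne : (1 + (2 * l + 1)) ≠ 1 + 2 * l := by omega
    have hj2 : 1 + (2 * l + 1) ∈ s.erase (1 + 2 * l) :=
      Finset.mem_erase.mpr ⟨hne, by rw [hs, Finset.mem_Icc]; omega⟩
    rw [Finset.card_erase_of_mem hj2, Finset.card_erase_of_mem hj1, hs, Nat.card_Icc]
    omega
  have step : ∀ l ∈ Finset.range (2 * t),
      (C 2 : Polynomial ℤ) ∣ ((1 - C (4 * (l : ℤ) + 2) * X) *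
          ∏ i ∈ (s.erase (1 + 2 * l)).erase (1 + (2 * l + 1)), A i - (1 + X) ^ (4 * t - 2)) := by
    intro l hl
    have hprod : (C 2 : Polynomial ℤ) ∣
        ((∏ i ∈ (s.erase (1 + 2 * l)).erase (1 + (2 * l + 1)), A i) - (1 + X) ^ (4 * t - 2)) := by
      rw [← hcard l hl]
      exact prod_congr_pow (fun i _ => A_mod2 i)
    have hcoef : (C 2 : Polynomial ℤ) ∣ (C (4 * (l : ℤ) + 2) : Polynomial ℤ) :=
      ⟨C (2 * (l : ℤ) + 1), by rw [← C_mul]; ring_nf⟩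
    have hrw : (1 - C (4 * (l : ℤ) + 2) * X) *
          (∏ i ∈ (s.erase (1 + 2 * l)).erase (1 + (2 * l + 1)), A i) - (1 + X) ^ (4 * t - 2)
        = ((∏ i ∈ (s.erase (1 + 2 * l)).erase (1 + (2 * l + 1)), A i) - (1 + X) ^ (4 * t - 2))
          - C (4 * (l : ℤ) + 2) *
            (X * ∏ i ∈ (s.erase (1 + 2 * l)).erase (1 + (2 * l + 1)), A i) := by ring
    rw [hrw]
    exact dvd_sub hprod (dvd_mul_of_dvd_left hcoef _)
  have hsplit : ∑ l ∈ Finset.range (2 * t), ((1 - C (4 * (l : ℤ) + 2) * X) *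
          ∏ i ∈ (s.erase (1 + 2 * l)).erase (1 + (2 * l + 1)), A i)
      = (∑ l ∈ Finset.range (2 * t), ((1 - C (4 * (l : ℤ) + 2) * X) *
          (∏ i ∈ (s.erase (1 + 2 * l)).erase (1 + (2 * l + 1)), A i) - (1 + X) ^ (4 * t - 2)))
        + (2 * t) • ((1 + X : Polynomial ℤ) ^ (4 * t - 2)) := by
    rw [Finset.sum_sub_distrib, Finset.sum_const, Finset.card_range]
    ring
  rw [hsplit]
  refine dvd_add (Finset.dvd_sum step) ?_
  refine ⟨(t : Polynomial ℤ) * (1 + X) ^ (4 * t - 2), ?_⟩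
  rw [nsmul_eq_mul]
  push_cast
  simp only [map_ofNat]
  ring

private lemma shift_congr (n : ℕ) (hn : 4 ∣ n) :
    (C (8 * (n : ℤ)) : Polynomial ℤ) ∣
      ((∏ i ∈ Finset.Icc 1 n, (A i - C (2 * (n : ℤ)) * X)) - ∏ i ∈ Finset.Icc 1 n, A i) := by
  obtain ⟨u, hu⟩ := hn
  obtain ⟨E, hE⟩ := prod_sub_expand (Finset.Icc 1 n) A (C (2 * (n : ℤ)) * X)
  rw [hE]
  obtain ⟨w, hw⟩ := S4 n ⟨u, hu⟩
  have h1 : (C (8 * (n : ℤ)) : Polynomial ℤ) ∣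
      C (2 * (n : ℤ)) * X * ∑ j ∈ Finset.Icc 1 n, ∏ i ∈ (Finset.Icc 1 n).erase j, A i := by
    rw [hw]
    have hc8 : (C (8 * (n : ℤ)) : Polynomial ℤ) = C (2 * (n : ℤ)) * C 4 := by
      rw [← C_mul]; congr 1; ring
    exact ⟨X * w, by rw [hc8]; ring⟩
  have h2 : (C (8 * (n : ℤ)) : Polynomial ℤ) ∣ (C (2 * (n : ℤ)) * X) ^ 2 * E := by
    refine ⟨C (2 * (u : ℤ)) * X ^ 2 * E, ?_⟩
    have hc : (C (2 * (n : ℤ)) : Polynomial ℤ) * C (2 * (n : ℤ))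
        = C (8 * (n : ℤ)) * C (2 * (u : ℤ)) := by
      rw [← C_mul, ← C_mul]
      congr 1
      have : (n : ℤ) = 4 * (u : ℤ) := by exact_mod_cast hu
      rw [this]; ring
    calc (C (2 * (n : ℤ)) * X) ^ 2 * E = (C (2 * (n : ℤ)) * C (2 * (n : ℤ))) * (X ^ 2 * E) := by
          ring
      _ = C (8 * (n : ℤ)) * (C (2 * (u : ℤ)) * X ^ 2 * E) := by rw [hc]; ring
  have hr : (∏ i ∈ Finset.Icc 1 n, A i
        - C (2 * (n : ℤ)) * X * ∑ j ∈ Finset.Icc 1 n, ∏ i ∈ (Finset.Icc 1 n).erase j, A i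
        + (C (2 * (n : ℤ)) * X) ^ 2 * E) - ∏ i ∈ Finset.Icc 1 n, A i
      = (C (2 * (n : ℤ)) * X) ^ 2 * E
        - C (2 * (n : ℤ)) * X * ∑ j ∈ Finset.Icc 1 n, ∏ i ∈ (Finset.Icc 1 n).erase j, A i := by
    ring
  rw [hr]
  exact dvd_sub h2 h1

private lemma prod_split (n : ℕ) :
    ∏ i ∈ Finset.Icc 1 (2 * n), A i
      = (∏ i ∈ Finset.Icc 1 n, A i) * ∏ i ∈ Finset.Icc 1 n, (A i - C (2 * (n : ℤ)) * X) := by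
  have e1 : ∀ k : ℕ, Finset.Icc 1 k = Finset.Ioc 0 k := by
    intro k; rw [← Finset.Icc_add_one_left_eq_Ioc]; rfl
  rw [e1, e1, ← Finset.prod_Ioc_consecutive A (Nat.zero_le n) (by omega : n ≤ 2 * n)]
  congr 1
  have e2 : Finset.Ioc n (2 * n) = (Finset.Ioc 0 n).map (addLeftEmbedding n) := by
    rw [Finset.map_add_left_Ioc]
    congr 1 <;> omega
  rw [e2, Finset.prod_map]
  refine Finset.prod_congr rfl (fun i _ => ?_)
  show A (n + i) = A i - C (2 * (n : ℤ)) * X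
  simp only [A]
  push_cast
  simp only [map_sub, map_add, map_mul, map_one, map_ofNat, map_natCast]
  ring

private lemma base3 : (C (16 : ℤ) : Polynomial ℤ) ∣
    ((∏ i ∈ Finset.Icc 1 4, A i) - (1 + C (3 : ℤ) * X ^ 2) ^ 2) := by
  have h4 : Finset.Icc 1 4 = {1, 2, 3, 4} := by decide
  rw [h4, Finset.prod_insert (by decide), Finset.prod_insert (by decide),
    Finset.prod_insert (by decide), Finset.prod_singleton]
  refine ⟨-X + 5 * X ^ 2 - 11 * X ^ 3 + 6 * X ^ 4, ?_⟩
  simp only [A]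
  push_cast
  simp only [map_sub, map_add, map_mul, map_one, map_ofNat, map_natCast]
  ring

private lemma main_congr (m : ℕ) (hm : 3 ≤ m) :
    (C ((2 : ℤ) ^ (m + 1)) : Polynomial ℤ) ∣
      ((∏ i ∈ Finset.Icc 1 (2 ^ (m - 1)), A i) - (1 + C (3 : ℤ) * X ^ 2) ^ (2 ^ (m - 2))) := by
  induction m, hm using Nat.le_induction with
  | base =>
    norm_num
    exact base3
  | succ m hm ih =>
    simp only [show m + 1 - 1 = m from by omega, show m + 1 - 2 = m - 1 from by omega,
      show m + 1 + 1 = m + 2 from by omega]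
    have h2m : (2 : ℕ) ^ m = 2 * 2 ^ (m - 1) := by
      rw [← pow_succ']
      congr 1
      omega
    have hQ2 : ((1 : Polynomial ℤ) + C (3 : ℤ) * X ^ 2) ^ (2 ^ (m - 1))
        = (((1 : Polynomial ℤ) + C (3 : ℤ) * X ^ 2) ^ (2 ^ (m - 2))) ^ 2 := by
      rw [← pow_mul]
      congr 1
      rw [← pow_succ]
      congr 1
      omega
    rw [h2m, prod_split (2 ^ (m - 1)), hQ2]
    set n : ℕ := 2 ^ (m - 1) with hn
    -- abbreviations
    set P : Polynomial ℤ := ∏ i ∈ Finset.Icc 1 n, A i with hP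
    set R : Polynomial ℤ := ∏ i ∈ Finset.Icc 1 n, (A i - C (2 * (n : ℤ)) * X) with hR
    set Q : Polynomial ℤ := (1 + C (3 : ℤ) * X ^ 2) ^ 2 ^ (m - 2) with hQ
    have hn4 : 4 ∣ n := by
      rw [hn]
      exact (pow_dvd_pow 2 (by omega : 2 ≤ m - 1)).trans dvd_rfl
    obtain ⟨v, hv⟩ := shift_congr n hn4
    obtain ⟨w, hw⟩ := ih
    have hcast : (8 * (n : ℤ)) = 2 ^ (m + 2) := by
      rw [hn]
      push_cast
      rw [show (8 : ℤ) = 2 ^ 3 from by norm_num, ← pow_add]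
      congr 1
      omega
    rw [hcast] at hv
    have e1 : (C ((2 : ℤ) ^ (m + 2)) : Polynomial ℤ) = 2 * C ((2 : ℤ) ^ (m + 1)) := by
      have : ((2 : ℤ) ^ (m + 2)) = 2 * 2 ^ (m + 1) := by rw [pow_succ]; ring
      rw [this, C_mul]
      norm_num
    have e2 : (C ((2 : ℤ) ^ (m + 1)) : Polynomial ℤ) * C ((2 : ℤ) ^ (m + 1))
        = 2 * C ((2 : ℤ) ^ (m + 1)) * C ((2 : ℤ) ^ m) := by
      rw [show ((2 : Polynomial ℤ)) = C (2 : ℤ) from by norm_num, ← C_mul, ← C_mul, ← C_mul]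
      congr 1
      rw [pow_succ]
      ring
    have hR' : R = P + C ((2 : ℤ) ^ (m + 2)) * v := by rw [← hv]; ring
    have hP' : P = Q + C ((2 : ℤ) ^ (m + 1)) * w := by rw [← hw]; ring
    refine ⟨P * v + C ((2 : ℤ) ^ m) * (w * w) + Q * w, ?_⟩
    rw [e1]
    calc P * R - Q ^ 2
        = P * (P + C ((2 : ℤ) ^ (m + 2)) * v) - Q ^ 2 := by rw [← hR']
      _ = 2 * C ((2 : ℤ) ^ (m + 1)) * (P * v + C ((2 : ℤ) ^ m) * (w * w) + Q * w) := by
          rw [e1, hP']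
          linear_combination (w * w) * e2

open Polynomial in
theorem prod_odd_linear_congr (m : ℕ) (hm : 3 ≤ m) :
    ∀ k : ℕ, (2 ^ (m + 1) : ℤ) ∣
      ((∏ i ∈ Finset.Icc 1 (2 ^ (m - 1)), (1 - C (2 * (i : ℤ) - 1) * X)) -
        (1 + C (3 : ℤ) * X ^ 2) ^ (2 ^ (m - 2))).coeff k := by
  have h := main_congr m hm
  simp only [A] at h
  rw [Polynomial.C_dvd_iff_dvd_coeff] at h
  intro k
  have hset : Finset.Icc (1 : ℤ) (2 ^ (m - 1)) =
      (Finset.Icc 1 (2 ^ (m - 1) : ℕ)).map Nat.castEmbedding := by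
    have hN : ((2 : ℤ)) ^ (m - 1) = ((2 ^ (m - 1) : ℕ) : ℤ) := by push_cast; ring
    rw [hN]
    generalize (2 ^ (m - 1) : ℕ) = N
    ext x
    simp only [Finset.mem_Icc, Finset.mem_map, Nat.castEmbedding_apply]
    constructor
    · rintro ⟨h1, h2⟩
      exact ⟨x.toNat, ⟨by omega, by omega⟩, by omega⟩
    · rintro ⟨a, ⟨h1, h2⟩, rfl⟩
      omega
  rw [hset, Finset.prod_map]
  simpa using h k
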